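/- arXiv:1209.4071 — 4 statements merged into one kernel-verified Lean document; each statement's English description precedes it below -/
import Mathlib

section
/- Let W : ℕ → ℝ satisfy W(n) = C(n) + C(n-1) + C(n-2) and C(n) = C(n-2) + C(n-3) for all sufficiently large n, where C takes positive values with C(0), C(1), C(2) > 0. Then W(n)^(1/n) converges to the unique positive root α of z^3 - z - 1. -/
open Filter


lemma rpow_one_div_tendsto_one (c : ℝ) (hc : 0 < c) :
    Tendsto (fun n : ℕ => c ^ (1 / (n : ℝ))) atTop (nhds 1) := by
  have h : ∀ n : ℕ, c ^ (1 / (n : ℝ)) = Real.exp (Real.log c * (1 / (n : ℝ))) := by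
    intro n
    rw [Real.rpow_def_of_pos hc]
  simp only [h]
  have h2 : Tendsto (fun n : ℕ => Real.log c * (1 / (n : ℝ))) atTop (nhds 0) := by
    have := tendsto_one_div_atTop_nhds_zero_nat (𝕜 := ℝ)
    simpa using this.const_mul (Real.log c)
  simpa [Function.comp_def] using (Real.continuous_exp.tendsto 0).comp h2

lemma geom_rpow_tendsto (c α : ℝ) (hc : 0 < c) (hα : 0 < α) :
    Tendsto (fun n : ℕ => (c * α ^ n) ^ (1 / (n : ℝ))) atTop (nhds α) := by
  have key : ∀ᶠ n : ℕ in atTop,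
      c ^ (1 / (n : ℝ)) * α = (c * α ^ n) ^ (1 / (n : ℝ)) := by
    filter_upwards [eventually_ge_atTop 1] with n hn
    have hn' : (n : ℝ) ≠ 0 := Nat.cast_ne_zero.mpr (by omega)
    rw [Real.mul_rpow hc.le (by positivity), ← Real.rpow_natCast α n,
      ← Real.rpow_mul hα.le, mul_one_div, div_self hn', Real.rpow_one]
  have h := (rpow_one_div_tendsto_one c hc).mul_const α
  rw [one_mul] at h
  exact h.congr' key


/-- If `W n = C n + C (n-1) + C (n-2)` and `C n = C (n-2) + C (n-3)` for all sufficiently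
large `n`, where `C` takes positive values (in particular `C 0, C 1, C 2 > 0`), then
`W n ^ (1/n)` converges to the unique positive root `α` of `z^3 - z - 1`. -/
theorem growth_rate_plastic_recurrence (W C : ℕ → ℝ) (α : ℝ)
    (hα_pos : 0 < α) (hα_root : α ^ 3 - α - 1 = 0)
    (hC_pos : ∀ n, 0 < C n) (hC0 : 0 < C 0) (hC1 : 0 < C 1) (hC2 : 0 < C 2)
    (hW : ∃ N, ∀ n ≥ N, W n = C n + C (n - 1) + C (n - 2))
    (hC : ∃ N, ∀ n ≥ N, C n = C (n - 2) + C (n - 3)) :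
    Tendsto (fun n : ℕ => W n ^ (1 / (n : ℝ))) atTop (nhds α) := by
  obtain ⟨N₁, hW⟩ := hW
  obtain ⟨N₂, hC⟩ := hC
  have hα1 : 1 < α := by nlinarith [sq_nonneg α, sq_nonneg (α - 1)]
  have hpow : ∀ m : ℕ, α ^ (m + 3) = α ^ (m + 1) + α ^ m := by
    intro m
    have h3 : α ^ 3 = α + 1 := by linarith
    calc α ^ (m + 3) = α ^ m * α ^ 3 := by ring
    _ = α ^ m * (α + 1) := by rw [h3]
    _ = α ^ (m + 1) + α ^ m := by ring
  set M := N₂ + 3 with hM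
  set a : ℝ := min (C M / α ^ M) (min (C (M+1) / α ^ (M+1)) (C (M+2) / α ^ (M+2))) with ha_def
  set b : ℝ := max (C M / α ^ M) (max (C (M+1) / α ^ (M+1)) (C (M+2) / α ^ (M+2))) with hb_def
  have hd0 : 0 < C M / α ^ M := div_pos (hC_pos _) (by positivity)
  have hd1 : 0 < C (M+1) / α ^ (M+1) := div_pos (hC_pos _) (by positivity)
  have hd2 : 0 < C (M+2) / α ^ (M+2) := div_pos (hC_pos _) (by positivity)
  have ha : 0 < a := lt_min hd0 (lt_min hd1 hd2)
  have hb : 0 < b := lt_of_lt_of_le hd0 (le_max_left _ _)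
  have hlow : ∀ k, a * α ^ (M + k) ≤ C (M + k) := by
    intro k
    induction k using Nat.strong_induction_on with
    | _ k ih =>
      match k with
      | 0 =>
        have : a ≤ C M / α ^ M := min_le_left _ _
        simpa using (le_div_iff₀ (by positivity)).mp this
      | 1 =>
        have : a ≤ C (M+1) / α ^ (M+1) := le_trans (min_le_right _ _) (min_le_left _ _)
        simpa using (le_div_iff₀ (by positivity)).mp this
      | 2 =>
        have : a ≤ C (M+2) / α ^ (M+2) := le_trans (min_le_right _ _) (min_le_right _ _)
        simpa using (le_div_iff₀ (by positivity)).mp this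
      | (j+3) =>
        have hrec := hC (M + (j + 3)) (by omega)
        have e1 : M + (j + 3) - 2 = M + (j + 1) := by omega
        have e2 : M + (j + 3) - 3 = M + j := by omega
        rw [e1, e2] at hrec
        have i1 := ih (j + 1) (by omega)
        have i2 := ih j (by omega)
        have hp' : α ^ (M + (j + 3)) = α ^ (M + (j + 1)) + α ^ (M + j) := by
          have hp := hpow (M + j)
          rwa [show M + j + 3 = M + (j + 3) by omega,
            show M + j + 1 = M + (j + 1) by omega] at hp
        rw [hrec, hp']
        nlinarith [i1, i2]
  have hhigh : ∀ k, C (M + k) ≤ b * α ^ (M + k) := by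
    intro k
    induction k using Nat.strong_induction_on with
    | _ k ih =>
      match k with
      | 0 =>
        have : C M / α ^ M ≤ b := le_max_left _ _
        simpa using (div_le_iff₀ (by positivity)).mp this
      | 1 =>
        have : C (M+1) / α ^ (M+1) ≤ b := le_trans (le_max_left _ _) (le_max_right _ _)
        simpa using (div_le_iff₀ (by positivity)).mp this
      | 2 =>
        have : C (M+2) / α ^ (M+2) ≤ b := le_trans (le_max_right _ _) (le_max_right _ _)
        simpa using (div_le_iff₀ (by positivity)).mp this
      | (j+3) =>
        have hrec := hC (M + (j + 3)) (by omega)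
        have e1 : M + (j + 3) - 2 = M + (j + 1) := by omega
        have e2 : M + (j + 3) - 3 = M + j := by omega
        rw [e1, e2] at hrec
        have i1 := ih (j + 1) (by omega)
        have i2 := ih j (by omega)
        have hp' : α ^ (M + (j + 3)) = α ^ (M + (j + 1)) + α ^ (M + j) := by
          have hp := hpow (M + j)
          rwa [show M + j + 3 = M + (j + 3) by omega,
            show M + j + 1 = M + (j + 1) by omega] at hp
        rw [hrec, hp']
        nlinarith [i1, i2]
  -- bounds for W
  set K := max N₁ (M + 2) with hK
  have hWlow : ∀ n ≥ K, a * α ^ n ≤ W n := by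
    intro n hn
    have hn1 : n ≥ N₁ := le_trans (le_max_left _ _) hn
    have hn2 : n ≥ M + 2 := le_trans (le_max_right _ _) hn
    rw [hW n hn1]
    have h0 : a * α ^ n ≤ C n := by
      have := hlow (n - M)
      rwa [show M + (n - M) = n by omega] at this
    have h1 := (hC_pos (n - 1)).le
    have h2 := (hC_pos (n - 2)).le
    linarith
  have hWhigh : ∀ n ≥ K, W n ≤ 3 * b * α ^ n := by
    intro n hn
    have hn1 : n ≥ N₁ := le_trans (le_max_left _ _) hn
    have hn2 : n ≥ M + 2 := le_trans (le_max_right _ _) hn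
    rw [hW n hn1]
    have h0 : C n ≤ b * α ^ n := by
      have := hhigh (n - M); rwa [show M + (n - M) = n by omega] at this
    have h1 : C (n - 1) ≤ b * α ^ (n - 1) := by
      have := hhigh (n - 1 - M); rwa [show M + (n - 1 - M) = n - 1 by omega] at this
    have h2 : C (n - 2) ≤ b * α ^ (n - 2) := by
      have := hhigh (n - 2 - M); rwa [show M + (n - 2 - M) = n - 2 by omega] at this
    have p1 : α ^ (n - 1) ≤ α ^ n := pow_le_pow_right₀ hα1.le (by omega)
    have p2 : α ^ (n - 2) ≤ α ^ n := pow_le_pow_right₀ hα1.le (by omega)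
    nlinarith
  -- squeeze
  refine tendsto_of_tendsto_of_tendsto_of_le_of_le'
    (geom_rpow_tendsto a α ha hα_pos) (geom_rpow_tendsto (3 * b) α (by positivity) hα_pos)
    ?_ ?_
  · filter_upwards [eventually_ge_atTop K] with n hn
    exact Real.rpow_le_rpow (by positivity) (hWlow n hn) (by positivity)
  · filter_upwards [eventually_ge_atTop K] with n hn
    have h0 : (0:ℝ) ≤ W n := le_trans (by positivity) (hWlow n hn)
    exact Real.rpow_le_rpow h0 (hWhigh n hn) (by positivity)
end

section
/- If a group G with finite generating set S contains elements x_1, ..., x_k that generate a free monoid (the submonoid generated by x_1,...,x_k is free on these generators), with word lengths ℓ_S(x_i) = ℓ_i, then the exponential growth rate ω(G,S) is at least the unique positive root of z^m - Σ_{i=1}^k z^{m-ℓ_i}, where m = max ℓ_i. -/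
open Filter

/-- The word length of `g` with respect to a generating set `S` (using letters from
`S ∪ S⁻¹`). -/
noncomputable def wordLength {G : Type*} [Group G] (S : Set G) (g : G) : ℕ :=
  sInf {n | ∃ l : List G, l.length = n ∧ (∀ x ∈ l, x ∈ S ∨ x⁻¹ ∈ S) ∧ l.prod = g}

/-- The growth function `F_{G,S}(n)`, counting elements of word length at most `n`. -/
noncomputable def growthFunction {G : Type*} [Group G] (S : Set G) (n : ℕ) : ℕ :=
  Nat.card {g : G | wordLength S g ≤ n}

section aux

variable {G : Type*} [Group G]

lemma exists_word (S : Set G) (hS : Subgroup.closure S = ⊤) (g : G) :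
    ∃ l : List G, (∀ y ∈ l, y ∈ S ∨ y⁻¹ ∈ S) ∧ l.prod = g := by
  have hg : g ∈ Submonoid.closure (S ∪ S⁻¹) := by
    rw [← Subgroup.closure_toSubmonoid, hS]
    trivial
  obtain ⟨l, hl, hp⟩ := Submonoid.exists_list_of_mem_closure hg
  refine ⟨l, fun y hy => ?_, hp⟩
  rcases hl y hy with h | h
  · exact Or.inl h
  · exact Or.inr (Set.mem_inv.mp h)

lemma exists_min_word (S : Set G) (hS : Subgroup.closure S = ⊤) (g : G) :
    ∃ l : List G, l.length = wordLength S g ∧ (∀ y ∈ l, y ∈ S ∨ y⁻¹ ∈ S) ∧ l.prod = g := by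
  have hne : {n | ∃ l : List G, l.length = n ∧ (∀ x ∈ l, x ∈ S ∨ x⁻¹ ∈ S) ∧ l.prod = g}.Nonempty := by
    obtain ⟨l, h1, h2⟩ := exists_word S hS g
    exact ⟨l.length, l, rfl, h1, h2⟩
  exact Nat.sInf_mem hne

lemma wordLength_le_len (S : Set G) {g : G} {l : List G}
    (h1 : ∀ y ∈ l, y ∈ S ∨ y⁻¹ ∈ S) (h2 : l.prod = g) :
    wordLength S g ≤ l.length :=
  Nat.sInf_le ⟨l, rfl, h1, h2⟩

lemma wordLength_mul_le (S : Set G) (hS : Subgroup.closure S = ⊤) (g h : G) :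
    wordLength S (g * h) ≤ wordLength S g + wordLength S h := by
  obtain ⟨l1, hl1, hm1, hp1⟩ := exists_min_word S hS g
  obtain ⟨l2, hl2, hm2, hp2⟩ := exists_min_word S hS h
  have := wordLength_le_len S (g := g * h) (l := l1 ++ l2)
    (fun y hy => by rcases List.mem_append.mp hy with h' | h'; exacts [hm1 y h', hm2 y h'])
    (by rw [List.prod_append, hp1, hp2])
  simpa [hl1, hl2] using this

lemma wordLength_one (S : Set G) : wordLength S 1 = 0 :=
  Nat.le_zero.mp (wordLength_le_len S (l := []) (by simp) (by simp))

lemma wordLength_listProd_le (S : Set G) (hS : Subgroup.closure S = ⊤) (l : List G) :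
    wordLength S l.prod ≤ (l.map (wordLength S)).sum := by
  induction l with
  | nil => simp [wordLength_one]
  | cons a t ih =>
      simp only [List.prod_cons, List.map_cons, List.sum_cons]
      exact le_trans (wordLength_mul_le S hS a t.prod) (by omega)

lemma finite_ball (S : Finset G) (hS : Subgroup.closure (S : Set G) = ⊤) (n : ℕ) :
    {g : G | wordLength (S : Set G) g ≤ n}.Finite := by
  classical
  have hTfin : ((S : Set G) ∪ (S : Set G)⁻¹).Finite := S.finite_toSet.union S.finite_toSet.inv
  have : Finite ↥((S : Set G) ∪ (S : Set G)⁻¹) := hTfin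
  have hlists := List.finite_length_le ↥((S : Set G) ∪ (S : Set G)⁻¹) n
  refine (hlists.image (fun l => (l.map Subtype.val).prod)).subset ?_
  intro g hg
  obtain ⟨l, hlen, hmem, hprod⟩ := exists_min_word (S : Set G) hS g
  have hmem' : ∀ y ∈ l, y ∈ (S : Set G) ∪ (S : Set G)⁻¹ := fun y hy => by
    rcases hmem y hy with h | h
    · exact Or.inl h
    · exact Or.inr (Set.mem_inv.mpr h)
  refine ⟨l.pmap Subtype.mk hmem', ?_, ?_⟩
  · simp only [Set.mem_setOf_eq, List.length_pmap]
    rw [hlen]; exact hg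
  · simp [List.map_pmap, hprod]

end aux

/-- If a group `G` with finite generating set `S` contains elements `x 0, …, x (k-1)`
generating a free monoid on these generators, with word lengths `ℓ i = ℓ_S (x i)` and
`m = max ℓ i`, then the exponential growth rate `ω(G,S)` is at least the unique positive
root of `z^m - ∑ i, z^(m - ℓ i)`. -/
theorem growth_rate_ge_root_of_free_monoid {G : Type*} [Group G]
    (S : Finset G) (hS : Subgroup.closure (S : Set G) = ⊤)
    (k : ℕ) (hk : 0 < k) (x : Fin k → G)
    (hfree : ∀ u v : List (Fin k), (u.map x).prod = (v.map x).prod → u = v)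
    (ℓ : Fin k → ℕ) (hℓ : ∀ i, ℓ i = wordLength (S : Set G) (x i))
    (m : ℕ) (hm : m = Finset.univ.sup ℓ)
    (r : ℝ) (hr_pos : 0 < r) (hr_root : r ^ m - ∑ i, r ^ (m - ℓ i) = 0)
    (ω : ℝ)
    (hω : Tendsto (fun n : ℕ => (growthFunction (S : Set G) n : ℝ) ^ (1 / (n : ℝ)))
      atTop (nhds ω)) :
    r ≤ ω := by
  classical
  -- growthFunction is at least 1
  have hFpos : ∀ n, 1 ≤ growthFunction (S : Set G) n := by
    intro n
    have hfin := finite_ball S hS n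
    have h1 : (1 : G) ∈ {g : G | wordLength (S : Set G) g ≤ n} := by
      simp [Set.mem_setOf_eq, wordLength_one]
    have : Nonempty {g : G | wordLength (S : Set G) g ≤ n} := ⟨⟨1, h1⟩⟩
    have : Finite {g : G | wordLength (S : Set G) g ≤ n} := hfin
    exact Nat.one_le_iff_ne_zero.mpr Nat.card_pos.ne'
  -- ω is at least 1
  have hω1 : (1 : ℝ) ≤ ω := by
    refine ge_of_tendsto hω (Eventually.of_forall fun n => ?_)
    exact Real.one_le_rpow (by exact_mod_cast hFpos n) (by positivity)
  rcases le_or_gt r 1 with hr1 | hr1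
  · exact hr1.trans hω1
  -- now r > 1
  -- each ℓ i is at least 1
  have hℓ1 : ∀ i, 1 ≤ ℓ i := by
    intro i
    by_contra hcon
    have hℓ0 : ℓ i = 0 := by omega
    have hx1 : x i = 1 := by
      obtain ⟨l, hlen, hmem, hprod⟩ := exists_min_word (S : Set G) hS (x i)
      rw [← hℓ i, hℓ0] at hlen
      rw [List.length_eq_zero_iff] at hlen
      rw [hlen] at hprod
      simpa using hprod.symm
    have := hfree [i] []
    simp [hx1] at this
  have hℓm : ∀ i, ℓ i ≤ m := fun i => hm ▸ Finset.le_sup (Finset.mem_univ i)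
  have hm1 : 1 ≤ m := le_trans (hℓ1 ⟨0, hk⟩) (hℓm ⟨0, hk⟩)
  -- the sets of words of weight at most n
  set W : ℕ → Set (List (Fin k)) := fun n => {u | (u.map ℓ).sum ≤ n} with hW
  have hWfin : ∀ n, (W n).Finite := by
    intro n
    refine (List.finite_length_le (Fin k) n).subset ?_
    intro u hu
    simp only [Set.mem_setOf_eq] at hu ⊢
    calc u.length = (u.map ℓ).length := (List.length_map ..).symm
      _ ≤ (u.map ℓ).sum := List.length_le_sum_of_one_le _ (by
          intro a ha
          obtain ⟨i, _, rfl⟩ := List.mem_map.mp ha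
          exact hℓ1 i)
      _ ≤ n := hu
  set Wf : ℕ → Finset (List (Fin k)) := fun n => (hWfin n).toFinset with hWfdef
  have hWfmem : ∀ n u, u ∈ Wf n ↔ (u.map ℓ).sum ≤ n := by
    intro n u
    simp [hWfdef, (hWfin n).mem_toFinset, hW]
  -- words give at most the growth function
  have hWle : ∀ n, (Wf n).card ≤ growthFunction (S : Set G) n := by
    intro n
    have hfin := finite_ball S hS n
    have : growthFunction (S : Set G) n = hfin.toFinset.card := by
      rw [growthFunction, Nat.card_coe_set_eq, Set.ncard_eq_toFinset_card _ hfin]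
    rw [this]
    refine Finset.card_le_card_of_injOn (fun u => (u.map x).prod) ?_ ?_
    · intro u hu
      rw [Finset.mem_coe, hWfmem] at hu
      rw [Finset.mem_coe, Set.Finite.mem_toFinset, Set.mem_setOf_eq]
      refine le_trans (le_trans (wordLength_listProd_le (S : Set G) hS (u.map x)) ?_) hu
      rw [List.map_map]
      apply le_of_eq
      congr 1
      exact List.map_congr_left fun i _ => (hℓ i).symm
    · intro u _ v _ h
      exact hfree u v h
  -- the recursive counting bound
  have hWrec : ∀ n, m ≤ n → ∑ i, (Wf (n - ℓ i)).card ≤ (Wf n).card := by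
    intro n hn
    have hsub : (Finset.univ.biUnion fun i => (Wf (n - ℓ i)).image (List.cons i)) ⊆ Wf n := by
      intro u hu
      simp only [Finset.mem_biUnion, Finset.mem_image, Finset.mem_univ, true_and] at hu
      obtain ⟨i, v, hv, rfl⟩ := hu
      rw [hWfmem] at hv ⊢
      simp only [List.map_cons, List.sum_cons]
      have := hℓm i
      omega
    calc ∑ i, (Wf (n - ℓ i)).card
        = ∑ i, ((Wf (n - ℓ i)).image (List.cons i)).card := by
          refine Finset.sum_congr rfl fun i _ => ?_
          rw [Finset.card_image_of_injective _ (fun a b h => by injection h)]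
      _ = (Finset.univ.biUnion fun i => (Wf (n - ℓ i)).image (List.cons i)).card := by
          refine (Finset.card_biUnion ?_).symm
          intro i _ j _ hij
          refine Finset.disjoint_left.mpr ?_
          intro u hu hu'
          simp only [Finset.mem_image] at hu hu'
          obtain ⟨a, _, rfl⟩ := hu
          obtain ⟨b, _, hb⟩ := hu'
          exact hij (by injection hb with h1 h2; exact h1.symm)
      _ ≤ (Wf n).card := Finset.card_le_card hsub
  -- main induction: r ^ (n + 1) ≤ r ^ m * card (Wf n)
  have hmain : ∀ n, r ^ (n + 1) ≤ r ^ m * ((Wf n).card : ℝ) := by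
    intro n
    induction n using Nat.strong_induction_on with
    | _ n ih =>
      rcases lt_or_ge n m with hnm | hnm
      · have hcard : 1 ≤ ((Wf n).card : ℝ) := by
          have : ([] : List (Fin k)) ∈ Wf n := by rw [hWfmem]; simp
          have := Finset.card_pos.mpr ⟨[], this⟩
          exact_mod_cast this
        calc r ^ (n + 1) ≤ r ^ m := pow_le_pow_right₀ hr1.le (by omega)
          _ = r ^ m * 1 := (mul_one _).symm
          _ ≤ r ^ m * ((Wf n).card : ℝ) := by
              exact mul_le_mul_of_nonneg_left hcard (by positivity)
      · have hroot : r ^ m = ∑ i, r ^ (m - ℓ i) := by linarith [hr_root]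
        have hkey : r ^ (n + 1) = ∑ i, r ^ (n + 1 - ℓ i) := by
          have : r ^ (n + 1) = r ^ (n + 1 - m) * r ^ m := by
            rw [← pow_add]
            congr 1
            omega
          rw [this, hroot, Finset.mul_sum]
          refine Finset.sum_congr rfl fun i _ => ?_
          rw [← pow_add]
          congr 1
          have := hℓm i
          omega
        rw [hkey]
        have hstep : ∀ i : Fin k, r ^ (n + 1 - ℓ i) ≤ r ^ m * ((Wf (n - ℓ i)).card : ℝ) := by
          intro i
          have h1 : n + 1 - ℓ i = (n - ℓ i) + 1 := by
            have := hℓm i; omega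
          rw [h1]
          exact ih (n - ℓ i) (by have := hℓ1 i; omega)
        calc ∑ i, r ^ (n + 1 - ℓ i) ≤ ∑ i, r ^ m * ((Wf (n - ℓ i)).card : ℝ) :=
              Finset.sum_le_sum fun i _ => hstep i
          _ = r ^ m * ((∑ i, (Wf (n - ℓ i)).card : ℕ) : ℝ) := by
              rw [← Finset.mul_sum]
              push_cast
              ring
          _ ≤ r ^ m * ((Wf n).card : ℝ) := by
              refine mul_le_mul_of_nonneg_left ?_ (by positivity)
              exact_mod_cast hWrec n hnm
  -- thus the growth function is at least (r / r^m) * r ^ n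
  set c : ℝ := r / r ^ m with hc
  have hcpos : 0 < c := by positivity
  have hgrow : ∀ n, c * r ^ n ≤ (growthFunction (S : Set G) n : ℝ) := by
    intro n
    have h1 := hmain n
    have h2 : ((Wf n).card : ℝ) ≤ (growthFunction (S : Set G) n : ℝ) := by
      exact_mod_cast hWle n
    have hrm : (0 : ℝ) < r ^ m := by positivity
    rw [hc, div_mul_eq_mul_div, div_le_iff₀ hrm]
    calc r * r ^ n = r ^ (n + 1) := by ring
      _ ≤ r ^ m * ((Wf n).card : ℝ) := h1
      _ ≤ r ^ m * (growthFunction (S : Set G) n : ℝ) := mul_le_mul_of_nonneg_left h2 hrm.le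
      _ = (growthFunction (S : Set G) n : ℝ) * r ^ m := mul_comm _ _
  -- pass to the limit
  have hlow : ∀ n : ℕ, 1 ≤ n →
      c ^ (1 / (n : ℝ)) * r ≤ (growthFunction (S : Set G) n : ℝ) ^ (1 / (n : ℝ)) := by
    intro n hn
    have hnpos : (0 : ℝ) < n := by exact_mod_cast hn
    have h1 : (c * r ^ n) ^ (1 / (n : ℝ)) ≤ (growthFunction (S : Set G) n : ℝ) ^ (1 / (n : ℝ)) :=
      Real.rpow_le_rpow (by positivity) (hgrow n) (by positivity)
    calc c ^ (1 / (n : ℝ)) * r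
        = c ^ (1 / (n : ℝ)) * (r ^ n) ^ (1 / (n : ℝ)) := by
          congr 1
          rw [← Real.rpow_natCast r n, ← Real.rpow_mul hr_pos.le]
          rw [mul_one_div, div_self hnpos.ne', Real.rpow_one]
      _ = (c * r ^ n) ^ (1 / (n : ℝ)) := (Real.mul_rpow hcpos.le (by positivity)).symm
      _ ≤ _ := h1
  have htend : Tendsto (fun n : ℕ => c ^ (1 / (n : ℝ)) * r) atTop (nhds r) := by
    have h1 : Tendsto (fun n : ℕ => (1 : ℝ) / n) atTop (nhds 0) :=
      tendsto_one_div_atTop_nhds_zero_nat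
    have h2 : Tendsto (fun n : ℕ => c ^ (1 / (n : ℝ))) atTop (nhds 1) := by
      have := (Real.continuousAt_const_rpow (a := c) (b := 0) hcpos.ne').tendsto.comp h1
      simpa [Real.rpow_zero, Function.comp_def] using this
    have := h2.mul_const r
    simpa using this
  refine le_of_tendsto_of_tendsto htend hω ?_
  filter_upwards [eventually_ge_atTop 1] with n hn
  exact hlow n hn
end

section
/- In the Coxeter group G = ⟨a, b, c | a² = b² = c² = (ab)² = (ac)³ = 1⟩ ≅ PGL(2,ℤ), every element has a unique minimal-length expression of the form U(a,b) or U(a,b)·c·s₁·c·s₂·c ⋯ c·V(a,b), where each s_i ∈ {b, ab} and U(a,b), V(a,b) ∈ {empty, a, b, ab}. -/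
/-- Relators of `PGL(2,ℤ) = ⟨a, b, c ∣ a² = b² = c² = (ab)² = (ac)³ = 1⟩`,
with `0 ↦ a`, `1 ↦ b`, `2 ↦ c`. -/
def pglRels : Set (FreeGroup (Fin 3)) :=
  {FreeGroup.of 0 ^ 2, FreeGroup.of 1 ^ 2, FreeGroup.of 2 ^ 2,
   (FreeGroup.of 0 * FreeGroup.of 1) ^ 2, (FreeGroup.of 0 * FreeGroup.of 2) ^ 3}

namespace PGLNF

abbrev G := PresentedGroup pglRels

def letter (i : Fin 3) : G := PresentedGroup.of i

local notation "a" => letter 0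
local notation "b" => letter 1
local notation "c" => letter 2

lemma rel_one {r : FreeGroup (Fin 3)} (hr : r ∈ pglRels) :
    (QuotientGroup.mk r : G) = 1 := by
  rw [QuotientGroup.eq_one_iff]
  exact Subgroup.subset_normalClosure hr

lemma of_eq (i : Fin 3) : (QuotientGroup.mk (FreeGroup.of i) : G) = letter i := rfl

lemma sq_one (i : Fin 3) : letter i * letter i = 1 := by
  have h : (QuotientGroup.mk (FreeGroup.of i ^ 2) : G) = 1 := by
    apply rel_one
    fin_cases i
    · exact Or.inl rfl
    · exact Or.inr (Or.inl rfl)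
    · exact Or.inr (Or.inr (Or.inl rfl))
  have : ((QuotientGroup.mk (FreeGroup.of i) : G)) ^ 2 = 1 := by
    rw [← h]; rfl
  rw [of_eq] at this; exact (pow_two (letter i)).symm.trans this

lemma hab : a * b = b * a := by
  have h : (QuotientGroup.mk ((FreeGroup.of 0 * FreeGroup.of 1) ^ 2) : G) = 1 :=
    rel_one (Or.inr (Or.inr (Or.inr (Or.inl rfl))))
  have h2 : (a * b) * (a * b) = 1 := by
    have : ((QuotientGroup.mk (FreeGroup.of 0 * FreeGroup.of 1) : G)) ^ 2 = 1 := by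
      rw [← h]; rfl
    rw [pow_two] at this; exact this
  have hinv : (a * b)⁻¹ = b * a := by
    rw [mul_inv_rev, inv_eq_iff_mul_eq_one.2 (sq_one 0), inv_eq_iff_mul_eq_one.2 (sq_one 1)]
  calc a * b = ((a*b)*(a*b)) * (a*b)⁻¹ := by group
    _ = b * a := by rw [h2, hinv, one_mul]

lemma hcac : c * (a * c) = a * (c * a) := by
  have h : (QuotientGroup.mk ((FreeGroup.of 0 * FreeGroup.of 2) ^ 3) : G) = 1 :=
    rel_one (Or.inr (Or.inr (Or.inr (Or.inr rfl))))
  have h3 : (a * c) * ((a * c) * (a * c)) = 1 := by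
    have : ((QuotientGroup.mk (FreeGroup.of 0 * FreeGroup.of 2) : G)) ^ 3 = 1 := by
      rw [← h]; rfl
    rw [pow_succ, pow_two, mul_assoc] at this; exact this
  -- a * (cacac) = 1  =>  cacac = a  => cac = a c a  (using invols)
  have ha := sq_one 0; have hc := sq_one 2
  have h4 : c * (a * (c * (a * c))) = a := by
    have := congrArg (fun x => a * x) h3
    simpa [mul_assoc, ← mul_assoc a a, ha] using this
  have := congrArg (fun x => x * (c * a)) h4
  simpa [mul_assoc, hc, ← mul_assoc c c, ← mul_assoc a a, ha] using this

/-! ### Normal form data -/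

def NF : Type := (Bool × Bool) × Option (List Bool × (Bool × Bool))

def uw : Bool × Bool → List (Fin 3)
  | (x, y) => (if x then [0] else []) ++ (if y then [1] else [])

def mw (m : Bool) : List (Fin 3) := (if m then [0] else []) ++ [1]

def tcode : Option (List Bool × (Bool × Bool)) → List (Fin 3)
  | none => []
  | some (ss, V) => 2 :: ((ss.map fun m => mw m ++ [2]).flatten ++ uw V)

def code : NF → List (Fin 3)
  | (U, t) => uw U ++ tcode t

def stepA : NF → NF
  | ((x, y), t) => ((!x, y), t)

def stepB : NF → NF
  | ((x, y), t) => ((x, !y), t)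

def stepC : NF → NF
  | (U, none) => ((false, false), some ([], U))
  | ((false, false), some ([], V)) => (V, none)
  | ((false, false), some (m :: ss, V)) => ((m, true), some (ss, V))
  | ((true, false), some ([], (x, y))) => ((true, false), some ([], (!x, y)))
  | ((true, false), some (m :: ss, V)) => ((true, false), some ((!m) :: ss, V))
  | ((x, true), some (ss, V)) => ((false, false), some (x :: ss, V))

def step : Fin 3 → NF → NF
  | 0 => stepA
  | 1 => stepB
  | 2 => stepC

lemma stepC_stepC : ∀ n : NF, stepC (stepC n) = n := by
  rintro ⟨⟨x, y⟩, _ | ⟨_ | ⟨m, ss⟩, vx, vy⟩⟩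
  · cases x <;> cases y <;> rfl
  · cases x <;> cases y <;> cases vx <;> cases vy <;> rfl
  · cases x <;> cases y <;> cases m <;> cases ss <;> rfl

lemma step_step : ∀ (i : Fin 3) (n : NF), step i (step i n) = n := by
  intro i
  fin_cases i
  · rintro ⟨⟨x, y⟩, t⟩; simp [step, stepA]; rfl
  · rintro ⟨⟨x, y⟩, t⟩; simp [step, stepB]; rfl
  · exact stepC_stepC

def pf (i : Fin 3) : Equiv.Perm NF :=
  ⟨step i, step i, step_step i, step_step i⟩

lemma acacac : ∀ n : NF, stepA (stepC (stepA (stepC (stepA (stepC n))))) = n := by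
  rintro ⟨⟨x, y⟩, _ | ⟨_ | ⟨m, ss⟩, vx, vy⟩⟩
  · cases x <;> cases y <;> rfl
  · cases x <;> cases y <;> cases vx <;> cases vy <;> rfl
  · cases x <;> cases y <;> cases m <;> cases ss <;> rfl

lemma hrels : ∀ r ∈ pglRels, FreeGroup.lift pf r = 1 := by
  rintro r (rfl | rfl | rfl | rfl | rfl) <;>
    · simp only [map_pow, map_mul, FreeGroup.lift_apply_of]
      ext n
      simp only [pow_succ, pow_zero, one_mul, Equiv.Perm.mul_apply, Equiv.Perm.one_apply,
        pf, Equiv.coe_fn_mk]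
      first
      | exact step_step _ n
      | (show step 0 (step 1 (step 0 (step 1 n))) = n
         rcases n with ⟨⟨x, y⟩, t⟩; simp [step, stepA, stepB]; rfl)
      | exact acacac n

def φ : G →* Equiv.Perm NF := PresentedGroup.toGroup hrels

lemma φ_of (i : Fin 3) (n : NF) : φ (letter i) n = step i n := by
  show (PresentedGroup.toGroup hrels (PresentedGroup.of i)) n = _
  rw [PresentedGroup.toGroup.of]
  rfl

/-! ### Products and reconstruction -/

def base : NF := ((false, false), none)

def wmap (n : NF) : List G := (code n).map letter

def wprod (n : NF) : G := (wmap n).prod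

lemma phi_list (l : List (Fin 3)) (x : NF) :
    φ ((l.map letter).prod) x = l.foldr step x := by
  induction l with
  | nil => simp
  | cons i t ih =>
      simp only [List.map_cons, List.prod_cons, map_mul, Equiv.Perm.mul_apply,
        List.foldr_cons, ih]
      exact φ_of i _

lemma foldr_uw (U : Bool × Bool) (t : Option (List Bool × (Bool × Bool))) :
    (uw U).foldr step ((false, false), t) = (U, t) := by
  rcases U with ⟨x, y⟩; cases x <;> cases y <;> rfl

lemma foldr_tail (ss : List Bool) (V : Bool × Bool) :
    (tcode (some (ss, V))).foldr step base = ((false, false), some (ss, V)) := by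
  induction ss with
  | nil =>
      show step 2 ((uw V).foldr step base) = _
      rw [show (base = (((false,false) : Bool × Bool), (none : Option (List Bool × (Bool × Bool))))) from rfl]
      rw [foldr_uw]
      rcases V with ⟨vx, vy⟩; cases vx <;> cases vy <;> rfl
  | cons m rest ih =>
      have h1 : tcode (some (m :: rest, V))
          = (2 :: mw m) ++ tcode (some (rest, V)) := by
        simp [tcode, mw]
      rw [h1, List.foldr_append, ih]
      cases m <;> cases rest <;> rfl

lemma recon (n : NF) : (code n).foldr step base = n := by
  rcases n with ⟨U, t⟩
  rcases t with _ | ⟨ss, V⟩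
  · show (uw U ++ []).foldr step base = _
    rw [List.append_nil]; exact foldr_uw U none
  · show (uw U ++ tcode (some (ss, V))).foldr step base = _
    rw [List.foldr_append, foldr_tail]
    exact foldr_uw U _

lemma phi_wprod (n : NF) : φ (wprod n) base = n := by
  rw [wprod, wmap, phi_list, recon]

/-! ### Compatibility of the action with multiplication -/

lemma mul_mul_cancel (i : Fin 3) : ∀ x : G, letter i * (letter i * x) = x := by
  intro x; rw [← mul_assoc, sq_one, one_mul]

lemma hab' : ∀ x : G, a * (b * x) = b * (a * x) := by
  intro x; rw [← mul_assoc, hab, mul_assoc]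

lemma hcac' : ∀ x : G, c * (a * (c * x)) = a * (c * (a * x)) := by
  intro x
  have h := hcac
  simp only [← mul_assoc] at h ⊢
  rw [h]

lemma lemA : ∀ n : NF, wprod (stepA n) = a * wprod n := by
  rintro ⟨⟨x, y⟩, t⟩
  cases x <;>
    simp [wprod, wmap, code, uw, stepA, List.map_append, List.prod_append, mul_assoc,
      mul_mul_cancel]

lemma lemB : ∀ n : NF, wprod (stepB n) = b * wprod n := by
  rintro ⟨⟨x, y⟩, t⟩
  cases x <;> cases y <;>
    simp [wprod, wmap, code, uw, stepB, List.map_append, List.prod_append, mul_assoc,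
      mul_mul_cancel, hab']

lemma lemC : ∀ n : NF, wprod (stepC n) = c * wprod n := by
  rintro ⟨⟨x, y⟩, _ | ⟨_ | ⟨m, ss⟩, vx, vy⟩⟩
  · cases x <;> cases y <;>
      simp [wprod, wmap, code, uw, mw, tcode, stepC, List.map_append, List.prod_append,
        mul_assoc, mul_mul_cancel, hab', hcac']
  · cases x <;> cases y <;> cases vx <;>
      simp [wprod, wmap, code, uw, mw, tcode, stepC, List.map_append, List.prod_append,
        mul_assoc, mul_mul_cancel, hab', hcac']
  · cases x <;> cases y <;> cases m <;>
      simp [wprod, wmap, code, uw, mw, tcode, stepC, List.map_append, List.prod_append,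
        mul_assoc, mul_mul_cancel, hab', hcac']

lemma lem_step : ∀ (i : Fin 3) (n : NF), wprod (step i n) = letter i * wprod n := by
  intro i
  fin_cases i
  · exact lemA
  · exact lemB
  · exact lemC

lemma wprod_phi : ∀ (g : G) (n : NF), wprod (φ g n) = g * wprod n := by
  intro g
  induction g using QuotientGroup.induction_on with
  | H z =>
    induction z using FreeGroup.induction_on with
    | C1 => intro n; show wprod (φ 1 n) = 1 * wprod n; rw [map_one, Equiv.Perm.one_apply, one_mul]
    | of i =>
        intro n
        have h1 : (QuotientGroup.mk (FreeGroup.of i : FreeGroup (Fin 3)) : G) = letter i := rfl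
        rw [h1, φ_of, lem_step]
    | inv_of i ih =>
        intro n
        have h1 : (QuotientGroup.mk ((FreeGroup.of i : FreeGroup (Fin 3))⁻¹) : G) = (letter i)⁻¹ := rfl
        have h0 : (QuotientGroup.mk (FreeGroup.of i : FreeGroup (Fin 3)) : G) = letter i := rfl
        have h2 := ih (φ (letter i)⁻¹ n)
        rw [h0] at h2
        rw [h1]
        have h3 : φ (letter i) (φ (letter i)⁻¹ n) = n := by
          rw [← Equiv.Perm.mul_apply, ← map_mul, mul_inv_cancel, map_one,
            Equiv.Perm.one_apply]
        rw [h3] at h2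
        rw [h2, ← mul_assoc, inv_mul_cancel, one_mul]
    | mul z w ihz ihw =>
        intro n
        have h1 : (QuotientGroup.mk (z * w) : G)
            = ((QuotientGroup.mk z : G) * (QuotientGroup.mk w : G) : G) := rfl
        rw [show φ (QuotientGroup.mk (z * w) : G) = φ (QuotientGroup.mk z) * φ (QuotientGroup.mk w)
          from map_mul φ (QuotientGroup.mk z : G) (QuotientGroup.mk w : G), Equiv.Perm.mul_apply, ihz, ihw, h1]
        exact (mul_assoc _ _ _).symm

/-! ### Length estimates -/

lemma len_step : ∀ (i : Fin 3) (n : NF),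
    (code (step i n)).length ≤ (code n).length + 1 := by
  intro i
  fin_cases i
  · rintro ⟨⟨x, y⟩, t⟩
    cases x <;> simp [step, stepA, code, uw, List.length_append] <;> omega
  · rintro ⟨⟨x, y⟩, t⟩
    cases x <;> cases y <;> simp [step, stepB, code, uw, List.length_append] <;> omega
  · rintro ⟨⟨x, y⟩, _ | ⟨_ | ⟨m, ss⟩, vx, vy⟩⟩
    · cases x <;> cases y <;>
        simp [step, stepC, code, uw, mw, tcode, List.length_append] <;> omega
    · cases x <;> cases y <;> cases vx <;> cases vy <;>
        simp [step, stepC, code, uw, mw, tcode, List.length_append] <;> omega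
    · cases x <;> cases y <;> cases m <;>
        simp [step, stepC, code, uw, mw, tcode, List.length_append] <;> omega

lemma inv_letter (i : Fin 3) : (letter i)⁻¹ = letter i :=
  inv_eq_of_mul_eq_one_right (sq_one i)

lemma mem_S {x : G} (h : x ∈ ({a, b, c} : Set G) ∨ x⁻¹ ∈ ({a, b, c} : Set G)) :
    ∃ i : Fin 3, x = letter i := by
  rcases h with h | h
  · rcases h with h | h | h
    exacts [⟨0, h⟩, ⟨1, h⟩, ⟨2, h⟩]
  · rcases h with h | h | h
    · exact ⟨0, by rw [← inv_inv x, h, inv_letter]⟩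
    · exact ⟨1, by rw [← inv_inv x, h, inv_letter]⟩
    · exact ⟨2, by rw [← inv_inv x, h, inv_letter]⟩

lemma len_bound : ∀ l : List G,
    (∀ x ∈ l, x ∈ ({a, b, c} : Set G) ∨ x⁻¹ ∈ ({a, b, c} : Set G)) →
    ∀ n : NF, (code (φ l.prod n)).length ≤ (code n).length + l.length := by
  intro l
  induction l with
  | nil => intro _ n; simp
  | cons x t ih =>
      intro h n
      obtain ⟨i, rfl⟩ := mem_S (h x List.mem_cons_self)
      have ht := ih (fun y hy => h y (List.mem_cons_of_mem _ hy)) n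
      calc (code (φ ((letter i :: t).prod) n)).length
          = (code (step i (φ t.prod n))).length := by
            rw [List.prod_cons, map_mul, Equiv.Perm.mul_apply, φ_of]
        _ ≤ (code (φ t.prod n)).length + 1 := len_step i _
        _ ≤ (code n).length + t.length + 1 := by omega
        _ = (code n).length + (letter i :: t).length := by simp [List.length_cons]; omega

/-! ### Word length -/

lemma wprod_base : wprod base = 1 := rfl

lemma wprod_phi_base (g : G) : wprod (φ g base) = g := by
  rw [wprod_phi, wprod_base, mul_one]

lemma letter_mem_S (i : Fin 3) : letter i ∈ ({a, b, c} : Set G) := by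
  fin_cases i
  · exact Set.mem_insert _ _
  · exact Set.mem_insert_of_mem _ (Set.mem_insert _ _)
  · exact Set.mem_insert_of_mem _ (Set.mem_insert_of_mem _ rfl)

lemma wmap_letters (n : NF) :
    ∀ x ∈ wmap n, x ∈ ({a, b, c} : Set G) ∨ x⁻¹ ∈ ({a, b, c} : Set G) := by
  intro x hx
  rw [wmap, List.mem_map] at hx
  obtain ⟨i, _, rfl⟩ := hx
  exact Or.inl (letter_mem_S i)

lemma wordLength_eq (g : G) :
    (wmap (φ g base)).length = wordLength ({a, b, c} : Set G) g := by
  have hmem : (wmap (φ g base)).length ∈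
      {n | ∃ l : List G, l.length = n ∧
        (∀ x ∈ l, x ∈ ({a, b, c} : Set G) ∨ x⁻¹ ∈ ({a, b, c} : Set G)) ∧ l.prod = g} :=
    ⟨wmap (φ g base), rfl, wmap_letters _, wprod_phi_base g⟩
  refine le_antisymm (le_csInf ⟨_, hmem⟩ ?_) (Nat.sInf_le hmem)
  rintro k ⟨l, rfl, hl, rfl⟩
  have := len_bound l hl base
  simpa [wmap, base, code, uw, tcode] using this

/-! ### Shapes -/

def ulist (U : Bool × Bool) : List G := (uw U).map letter
def mlist (m : Bool) : List G := (mw m).map letter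

lemma wmap_none (U : Bool × Bool) : wmap (U, none) = ulist U := by
  simp [wmap, code, tcode, ulist]

lemma wmap_some (U : Bool × Bool) (ss : List Bool) (V : Bool × Bool) :
    wmap (U, some (ss, V)) =
      ulist U ++ [c] ++ (((ss.map mlist).map fun s => s ++ [c]).flatten) ++ ulist V := by
  have hfun : (List.map letter ∘ fun m => mw m ++ [2]) = ((fun s => s ++ [c]) ∘ mlist) := by
    funext m; simp [mlist, Function.comp]
  simp only [wmap, code, tcode, ulist, mlist, List.map_append, List.map_cons,
    List.map_flatten, List.map_map, hfun]
  simp [Function.comp, List.append_assoc]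

lemma UVprop (U : Bool × Bool) :
    ulist U = [] ∨ ulist U = [a] ∨ ulist U = [b] ∨ ulist U = [a, b] := by
  rcases U with ⟨x, y⟩
  cases x <;> cases y
  · exact Or.inl rfl
  · exact Or.inr (Or.inr (Or.inl rfl))
  · exact Or.inr (Or.inl rfl)
  · exact Or.inr (Or.inr (Or.inr rfl))

lemma midprop (m : Bool) : mlist m = [b] ∨ mlist m = [a, b] := by
  cases m
  · exact Or.inl rfl
  · exact Or.inr rfl

lemma parse_uv {L : List G} (h : L = [] ∨ L = [a] ∨ L = [b] ∨ L = [a, b]) :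
    ∃ U : Bool × Bool, L = ulist U := by
  rcases h with rfl | rfl | rfl | rfl
  exacts [⟨(false, false), rfl⟩, ⟨(true, false), rfl⟩, ⟨(false, true), rfl⟩,
    ⟨(true, true), rfl⟩]

lemma parse_ms : ∀ {ss : List (List G)}, (∀ s ∈ ss, s = [b] ∨ s = [a, b]) →
    ∃ ms : List Bool, ss = ms.map mlist := by
  intro ss
  induction ss with
  | nil => exact fun _ => ⟨[], rfl⟩
  | cons s t ih =>
      intro h
      obtain ⟨ms, rfl⟩ := ih fun x hx => h x (List.mem_cons_of_mem _ hx)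
      rcases h s List.mem_cons_self with rfl | rfl
      · exact ⟨false :: ms, rfl⟩
      · exact ⟨true :: ms, rfl⟩

/-! ### Final assembly lemmas -/

lemma shape_spec (n : NF) :
    (∃ U, (U = [] ∨ U = [a] ∨ U = [b] ∨ U = [a, b]) ∧ wmap n = U) ∨
    (∃ U, ∃ V, ∃ ss : List (List G),
      (U = [] ∨ U = [a] ∨ U = [b] ∨ U = [a, b]) ∧
      (V = [] ∨ V = [a] ∨ V = [b] ∨ V = [a, b]) ∧
      (∀ s ∈ ss, s = [b] ∨ s = [a, b]) ∧
      wmap n = U ++ [c] ++ (ss.map fun s => s ++ [c]).flatten ++ V) := by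
  rcases n with ⟨U, _ | ⟨ss, V⟩⟩
  · exact Or.inl ⟨ulist U, UVprop U, wmap_none U⟩
  · refine Or.inr ⟨ulist U, ulist V, ss.map mlist, UVprop U, UVprop V, ?_, ?_⟩
    · intro s hs
      obtain ⟨m, -, rfl⟩ := List.mem_map.1 hs
      exact midprop m
    · exact wmap_some U ss V

lemma parse_shape {w' : List G}
    (h : (∃ U, (U = [] ∨ U = [a] ∨ U = [b] ∨ U = [a, b]) ∧ w' = U) ∨
      (∃ U, ∃ V, ∃ ss : List (List G),
        (U = [] ∨ U = [a] ∨ U = [b] ∨ U = [a, b]) ∧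
        (V = [] ∨ V = [a] ∨ V = [b] ∨ V = [a, b]) ∧
        (∀ s ∈ ss, s = [b] ∨ s = [a, b]) ∧
        w' = U ++ [c] ++ (ss.map fun s => s ++ [c]).flatten ++ V)) :
    ∃ n : NF, w' = wmap n := by
  rcases h with ⟨U, hU, rfl⟩ | ⟨U, V, ss, hU, hV, hss, rfl⟩
  · obtain ⟨d, rfl⟩ := parse_uv hU
    exact ⟨(d, none), (wmap_none d).symm⟩
  · obtain ⟨dU, rfl⟩ := parse_uv hU
    obtain ⟨dV, rfl⟩ := parse_uv hV
    obtain ⟨ms, rfl⟩ := parse_ms hss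
    exact ⟨(dU, some (ms, dV)), (wmap_some dU ms dV).symm⟩

lemma wmap_inj {n n' : NF} (h : wprod n = wprod n') : n = n' := by
  have h1 := phi_wprod n
  rw [h, phi_wprod] at h1
  exact h1.symm

end PGLNF

/-- In the Coxeter group `G = ⟨a, b, c ∣ a² = b² = c² = (ab)² = (ac)³ = 1⟩ ≅ PGL(2,ℤ)`,
every element has a unique minimal-length expression of the form `U(a,b)` or
`U(a,b)·c·s₁·c·s₂·c ⋯ c·V(a,b)`, where each `sᵢ ∈ {b, ab}` and
`U(a,b), V(a,b) ∈ {∅, a, b, ab}`. -/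
theorem pgl_normal_form :
    ∀ g : PresentedGroup pglRels,
      letI a : PresentedGroup pglRels := PresentedGroup.of 0
      letI b : PresentedGroup pglRels := PresentedGroup.of 1
      letI c : PresentedGroup pglRels := PresentedGroup.of 2
      letI UV : List (PresentedGroup pglRels) → Prop :=
        fun U => U = [] ∨ U = [a] ∨ U = [b] ∨ U = [a, b]
      ∃! w : List (PresentedGroup pglRels),
        ((∃ U, UV U ∧ w = U) ∨
          (∃ U, ∃ V, ∃ ss : List (List (PresentedGroup pglRels)), UV U ∧ UV V ∧
            (∀ s ∈ ss, s = [b] ∨ s = [a, b]) ∧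
            w = U ++ [c] ++ (ss.map fun s => s ++ [c]).flatten ++ V)) ∧
        w.prod = g ∧ w.length = wordLength {a, b, c} g := by
  intro g
  refine ⟨PGLNF.wmap (PGLNF.φ g PGLNF.base),
    ⟨?_, PGLNF.wprod_phi_base g, PGLNF.wordLength_eq g⟩, ?_⟩
  · exact PGLNF.shape_spec _
  · rintro w' ⟨hs, hp, -⟩
    obtain ⟨n', rfl⟩ := PGLNF.parse_shape hs
    have h2 : PGLNF.wprod n' = PGLNF.wprod (PGLNF.φ g PGLNF.base) := by
      rw [PGLNF.wprod_phi_base]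
      exact hp
    rw [PGLNF.wmap_inj h2]
end

section
/- The exponential growth rate of PGL(2,ℤ) = ⟨a, b, c | a² = b² = c² = (ab)² = (ac)³ = 1⟩ with respect to the generating set S = {a, b, c} equals the unique positive root α of the polynomial z³ - z - 1. -/
open Filter

namespace PGL

abbrev G := PresentedGroup pglRels
def gen : Fin 3 → G := fun i => PresentedGroup.of i
lemma mk_rel {r : FreeGroup (Fin 3)} (h : r ∈ pglRels) : PresentedGroup.mk pglRels r = 1 :=
  (QuotientGroup.eq_one_iff _).mpr (Subgroup.subset_normalClosure h)

lemma gen_sq (i : Fin 3) : gen i * gen i = 1 := by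
  fin_cases i
  · simpa [gen, PresentedGroup.of, sq, map_mul] using
      mk_rel (show (FreeGroup.of 0 ^ 2 : FreeGroup (Fin 3)) ∈ pglRels by simp [pglRels])
  · simpa [gen, PresentedGroup.of, sq, map_mul] using
      mk_rel (show (FreeGroup.of 1 ^ 2 : FreeGroup (Fin 3)) ∈ pglRels by simp [pglRels])
  · simpa [gen, PresentedGroup.of, sq, map_mul] using
      mk_rel (show (FreeGroup.of 2 ^ 2 : FreeGroup (Fin 3)) ∈ pglRels by simp [pglRels])

lemma gen_inv (i : Fin 3) : (gen i)⁻¹ = gen i := inv_eq_of_mul_eq_one_right (gen_sq i)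

lemma rel_ab : gen 0 * gen 1 * (gen 0 * gen 1) = 1 := by
  simpa [gen, PresentedGroup.of, sq, map_mul] using
    mk_rel (show ((FreeGroup.of 0 * FreeGroup.of 1) ^ 2 : FreeGroup (Fin 3)) ∈ pglRels by
      simp [pglRels])

lemma rel_ac : gen 0 * gen 2 * (gen 0 * gen 2) * (gen 0 * gen 2) = 1 := by
  have := mk_rel (show ((FreeGroup.of 0 * FreeGroup.of 2) ^ 3 : FreeGroup (Fin 3)) ∈ pglRels by
    simp [pglRels])
  rw [pow_succ, pow_succ, pow_one] at this
  simp only [map_mul] at this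
  exact this

lemma comm_ba : gen 1 * gen 0 = gen 0 * gen 1 := by
  have h : (gen 0 * gen 1)⁻¹ = gen 0 * gen 1 := inv_eq_of_mul_eq_one_right rel_ab
  calc gen 1 * gen 0 = (gen 1)⁻¹ * (gen 0)⁻¹ := by rw [gen_inv, gen_inv]
    _ = (gen 0 * gen 1)⁻¹ := (mul_inv_rev _ _).symm
    _ = gen 0 * gen 1 := h

lemma braid : gen 2 * gen 0 * gen 2 = gen 0 * gen 2 * gen 0 := by
  have h : (gen 0 * gen 2)⁻¹ = gen 0 * gen 2 * (gen 0 * gen 2) := by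
    rw [inv_eq_iff_mul_eq_one, ← mul_assoc]; exact rel_ac
  have h2 : (gen 2)⁻¹ * (gen 0)⁻¹ = gen 0 * gen 2 * (gen 0 * gen 2) := by
    rw [← mul_inv_rev]; exact h
  rw [gen_inv, gen_inv] at h2
  -- c * a = acac
  calc gen 2 * gen 0 * gen 2 = gen 0 * gen 2 * (gen 0 * gen 2) * gen 2 := by rw [h2]
    _ = gen 0 * gen 2 * gen 0 * (gen 2 * gen 2) := by group
    _ = gen 0 * gen 2 * gen 0 := by rw [gen_sq]; group


/-! ### Words and evaluation -/

def evalG (w : List (Fin 3)) : G := (w.map gen).prod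

@[simp] lemma evalG_nil : evalG [] = 1 := rfl
@[simp] lemma evalG_cons (x : Fin 3) (w : List (Fin 3)) :
    evalG (x :: w) = gen x * evalG w := by simp [evalG]
lemma evalG_append (u v : List (Fin 3)) : evalG (u ++ v) = evalG u * evalG v := by
  simp [evalG]

lemma evalG_reverse (w : List (Fin 3)) : evalG w.reverse = (evalG w)⁻¹ := by
  induction w with
  | nil => simp
  | cons x t ih =>
    rw [List.reverse_cons, evalG_append, ih,
      show evalG (x :: t) = gen x * evalG t from evalG_cons x t, mul_inv_rev, gen_inv]
    simp

lemma exists_word (g : G) : ∃ w, evalG w = g := by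
  let H : Subgroup G :=
    { carrier := {g | ∃ w, evalG w = g}
      one_mem' := ⟨[], rfl⟩
      mul_mem' := by
        rintro x y ⟨w1, rfl⟩ ⟨w2, rfl⟩
        exact ⟨w1 ++ w2, evalG_append _ _⟩
      inv_mem' := by
        rintro x ⟨w, rfl⟩
        exact ⟨w.reverse, evalG_reverse w⟩ }
  exact PresentedGroup.generated_by pglRels H (fun j => ⟨[j], by simp [evalG, gen]⟩) g

/-! ### Rewriting system -/

def Rules : List (List (Fin 3) × List (Fin 3)) :=
  [([0,0],[]), ([1,1],[]), ([2,2],[]), ([1,0],[0,1]), ([2,0,2],[0,2,0])]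

def mval : List (Fin 3) → ℕ
  | [] => 0
  | d :: w => (d.val + 1) * 4 ^ w.length + mval w

lemma mval_append (u v : List (Fin 3)) : mval (u ++ v) = mval u * 4 ^ v.length + mval v := by
  induction u with
  | nil => simp [mval]
  | cons x t ih => simp [mval, ih, List.length_append, pow_add]; ring

lemma mval_lt (w : List (Fin 3)) : mval w < 4 ^ w.length := by
  induction w with
  | nil => simp [mval]
  | cons x t ih =>
    have hx : x.val + 1 ≤ 3 := by omega
    calc mval (x :: t) = (x.val + 1) * 4 ^ t.length + mval t := rfl
      _ < (x.val + 1) * 4 ^ t.length + 4 ^ t.length := by omega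
      _ ≤ 4 * 4 ^ t.length := by nlinarith [pow_pos (by norm_num : (0:ℕ) < 4) t.length]
      _ = 4 ^ (x :: t).length := by rw [List.length_cons]; ring

def Red (w w' : List (Fin 3)) : Prop :=
  ∃ u p v, p ∈ Rules ∧ w = u ++ p.1 ++ v ∧ w' = u ++ p.2 ++ v

lemma rules_sound : ∀ p ∈ Rules, evalG p.1 = evalG p.2 := by
  intro p hp
  simp only [Rules, List.mem_cons, List.not_mem_nil, or_false] at hp
  rcases hp with rfl | rfl | rfl | rfl | rfl
  · simp [gen_sq]
  · simp [gen_sq]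
  · simp [gen_sq]
  · simp [← mul_assoc, comm_ba]
  · simp only [evalG_cons, evalG_nil, mul_one, ← mul_assoc]
    exact braid

lemma rules_len : ∀ p ∈ Rules, p.2.length ≤ p.1.length := by decide
lemma rules_mval : ∀ p ∈ Rules, mval p.2 < mval p.1 := by decide

lemma red_eval {w w'} (h : Red w w') : evalG w = evalG w' := by
  obtain ⟨u, p, v, hp, rfl, rfl⟩ := h
  simp only [evalG_append, rules_sound p hp]

lemma red_len {w w'} (h : Red w w') : w'.length ≤ w.length := by
  obtain ⟨u, p, v, hp, rfl, rfl⟩ := h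
  have := rules_len p hp
  simp only [List.length_append]; omega

lemma red_mval {w w'} (h : Red w w') : mval w' < mval w := by
  obtain ⟨u, p, v, hp, rfl, rfl⟩ := h
  have h1 := rules_mval p hp
  have h2 := rules_len p hp
  rw [mval_append, mval_append, mval_append, mval_append]
  have hp4 : (4:ℕ) ^ p.2.length ≤ 4 ^ p.1.length := Nat.pow_le_pow_right (by norm_num) h2
  have hv : (0:ℕ) < 4 ^ v.length := pow_pos (by norm_num) _
  calc (mval u * 4 ^ p.2.length + mval p.2) * 4 ^ v.length + mval v
      < (mval u * 4 ^ p.2.length + mval p.1) * 4 ^ v.length + mval v := by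
        have : mval u * 4 ^ p.2.length + mval p.2 < mval u * 4 ^ p.2.length + mval p.1 := by omega
        exact by nlinarith
    _ ≤ (mval u * 4 ^ p.1.length + mval p.1) * 4 ^ v.length + mval v := by
        have : mval u * 4 ^ p.2.length ≤ mval u * 4 ^ p.1.length := Nat.mul_le_mul_left _ hp4
        nlinarith

lemma red_cons {w w'} (x : Fin 3) (h : Red w w') : Red (x :: w) (x :: w') := by
  obtain ⟨u, p, v, hp, rfl, rfl⟩ := h
  exact ⟨x :: u, p, v, hp, rfl, rfl⟩

/-! ### Irreducible words -/

def good2 : Fin 3 → Fin 3 → Bool := fun x y =>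
  match y with
  | 0 => x = 2
  | 1 => !(x = 1)
  | 2 => !(x = 2)

def headIs2 : List (Fin 3) → Bool
  | 2 :: _ => true
  | _ => false

def ok : List (Fin 3) → Bool
  | [] => true
  | [_] => true
  | x :: y :: w =>
    good2 x y && !(decide (x = 2) && decide (y = 0) && headIs2 w) && ok (y :: w)

lemma headIs2_eq {w : List (Fin 3)} (h : headIs2 w = true) : ∃ t, w = 2 :: t := by
  match w with
  | 2 :: t => exact ⟨t, rfl⟩
  | [] => simp [headIs2] at h
  | 0 :: t => simp [headIs2] at h
  | 1 :: t => simp [headIs2] at h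

lemma not_ok_red (w : List (Fin 3)) (h : ok w = false) : ∃ w', Red w w' := by
  induction w with
  | nil => simp [ok] at h
  | cons x t ih =>
    match t with
    | [] => simp [ok] at h
    | y :: t =>
      rw [ok] at h
      simp only [Bool.and_eq_false_iff] at h
      rcases h with (hg | h3) | ht
      · -- bad pair
        have hc : (x = 0 ∧ y = 0) ∨ (x = 1 ∧ y = 0) ∨ (x = 1 ∧ y = 1) ∨ (x = 2 ∧ y = 2) := by
          revert hg; fin_cases x <;> fin_cases y <;> simp [good2] <;> decide
        rcases hc with ⟨rfl, rfl⟩ | ⟨rfl, rfl⟩ | ⟨rfl, rfl⟩ | ⟨rfl, rfl⟩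
        · exact ⟨_, [], ([0,0],[]), t, by simp [Rules], rfl, rfl⟩
        · exact ⟨_, [], ([1,0],[0,1]), t, by simp [Rules], rfl, rfl⟩
        · exact ⟨_, [], ([1,1],[]), t, by simp [Rules], rfl, rfl⟩
        · exact ⟨_, [], ([2,2],[]), t, by simp [Rules], rfl, rfl⟩
      · -- cac pattern
        simp at h3
        obtain ⟨⟨rfl, rfl⟩, hh⟩ := h3
        obtain ⟨t', rfl⟩ := headIs2_eq hh
        exact ⟨_, [], ([2,0,2],[0,2,0]), t', by simp [Rules], rfl, rfl⟩
      · obtain ⟨w', hw'⟩ := ih ht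
        exact ⟨_, red_cons x hw'⟩



/-! ### Every element has an irreducible representative -/

lemma exists_ok_aux : ∀ (n : ℕ) (w : List (Fin 3)), mval w ≤ n →
    ∃ w', ok w' = true ∧ evalG w' = evalG w ∧ w'.length ≤ w.length := by
  intro n
  induction n using Nat.strong_induction_on with
  | _ n ih =>
    intro w hw
    cases hok : ok w with
    | true => exact ⟨w, hok, rfl, le_rfl⟩
    | false =>
      obtain ⟨w', hred⟩ := not_ok_red w hok
      have hlt : mval w' < mval w := red_mval hred
      obtain ⟨w'', h1, h2, h3⟩ := ih (mval w') (by omega) w' le_rfl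
      exact ⟨w'', h1, h2.trans (red_eval hred).symm, h3.trans (red_len hred)⟩

lemma exists_ok (w : List (Fin 3)) :
    ∃ w', ok w' = true ∧ evalG w' = evalG w ∧ w'.length ≤ w.length :=
  exists_ok_aux (mval w) w le_rfl

/-! ### Structure of irreducible words -/

def block : Bool → List (Fin 3) := fun f => if f then [2,0,1] else [2,1]

def tailB : Fin 3 → List (Fin 3)
  | 0 => []
  | 1 => [2]
  | 2 => [2,0]

def decodeSkel (flags : List Bool) (tail : Fin 3) : List (Fin 3) :=
  (flags.flatMap block) ++ tailB tail

def weight (flags : List Bool) : ℕ := (flags.map (fun f => if f then 3 else 2)).sum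

@[simp] lemma weight_nil : weight [] = 0 := rfl
@[simp] lemma weight_cons (f : Bool) (l : List Bool) :
    weight (f :: l) = (if f then 3 else 2) + weight l := by simp [weight]

lemma weight_cons_false (l : List Bool) : weight (false :: l) = 2 + weight l := by simp [weight]
lemma weight_cons_true (l : List Bool) : weight (true :: l) = 3 + weight l := by simp [weight]

lemma ok_tail {x : Fin 3} {w : List (Fin 3)} (h : ok (x :: w) = true) : ok w = true := by
  match w with
  | [] => rfl
  | y :: t =>
    rw [ok] at h
    exact (Bool.and_eq_true _ _).mp h |>.2

lemma ok_head_pair {x y : Fin 3} {w : List (Fin 3)} (h : ok (x :: y :: w) = true) :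
    good2 x y = true := by
  rw [ok] at h
  have := ((Bool.and_eq_true _ _).mp ((Bool.and_eq_true _ _).mp h).1).1
  exact this

lemma after_b {z : Fin 3} (h : good2 1 z = true) : z = 2 := by
  fin_cases z <;> simp_all [good2]

lemma after_b_list {rest : List (Fin 3)} (h : ok (1 :: rest) = true) :
    rest = [] ∨ ∃ t, rest = 2 :: t := by
  match rest with
  | [] => exact Or.inl rfl
  | z :: t =>
    right
    have := after_b (ok_head_pair h)
    exact ⟨t, by rw [this]⟩

theorem okC : ∀ (w : List (Fin 3)), ok w = true → (w = [] ∨ ∃ t, w = 2 :: t) →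
    ∃ flags tail, decodeSkel flags tail = w ∧ weight flags + (tailB tail).length = w.length := by
  intro w
  match w with
  | [] => exact fun _ _ => ⟨[], 0, rfl, rfl⟩
  | [2] => exact fun _ _ => ⟨[], 1, rfl, rfl⟩
  | [2,0] => exact fun _ _ => ⟨[], 2, rfl, rfl⟩
  | 2 :: 1 :: rest =>
    intro h _
    have h1 : ok (1 :: rest) = true := ok_tail h
    obtain ⟨flags, tail, hdec, hlen⟩ := okC rest (ok_tail h1) (after_b_list h1)
    refine ⟨false :: flags, tail, ?_, ?_⟩
    · simp [decodeSkel, block] at hdec ⊢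
      rw [hdec]
    · simp only [weight_cons, List.length_cons]
      norm_num
      omega
  | 2 :: 0 :: 1 :: rest =>
    intro h _
    have h1 : ok (0 :: 1 :: rest) = true := ok_tail h
    have h2 : ok (1 :: rest) = true := ok_tail h1
    obtain ⟨flags, tail, hdec, hlen⟩ := okC rest (ok_tail h2) (after_b_list h2)
    refine ⟨true :: flags, tail, ?_, ?_⟩
    · simp [decodeSkel, block] at hdec ⊢
      rw [hdec]
    · simp only [weight_cons, List.length_cons]
      norm_num
      omega
  | 2 :: 0 :: 0 :: rest =>
    intro h _
    exfalso
    have := ok_head_pair (ok_tail h)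
    simp [good2] at this
  | 2 :: 0 :: 2 :: rest =>
    intro h _
    exfalso
    rw [ok] at h
    simp [headIs2] at h
  | 2 :: 2 :: rest =>
    intro h _
    exfalso
    have := ok_head_pair h
    simp [good2] at this
  | (0 : Fin 3) :: rest =>
    rintro _ (h | ⟨t, h⟩) <;> simp at h
  | (1 : Fin 3) :: rest =>
    rintro _ (h | ⟨t, h⟩) <;> simp at h
termination_by w => w.length

def decodeFull : Bool × Bool × List Bool × Fin 3 → List (Fin 3)
  | (la, lb, flags, tail) =>
    (if la then [0] else []) ++ (if lb then [1] else []) ++ decodeSkel flags tail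

theorem okFull (w : List (Fin 3)) (h : ok w = true) :
    ∃ code : Bool × Bool × List Bool × Fin 3,
      decodeFull code = w ∧ weight code.2.2.1 ≤ w.length := by
  have skel : ∀ v : List (Fin 3), ok v = true → (v = [] ∨ ∃ t, v = 2 :: t) →
      ∀ (la lb : Bool),
      (if la then [0] else []) ++ ((if lb then [1] else []) : List (Fin 3)) ++ v = w →
      v.length ≤ w.length →
      ∃ code : Bool × Bool × List Bool × Fin 3,
        decodeFull code = w ∧ weight code.2.2.1 ≤ w.length := by
    intro v hv hs la lb heq hle
    obtain ⟨flags, tail, hdec, hlen⟩ := okC v hv hs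
    refine ⟨(la, lb, flags, tail), by simp only [decodeFull, hdec, heq], ?_⟩
    show weight flags ≤ w.length
    omega
  cases w with
  | nil => exact ⟨(false, false, [], 0), rfl, by simp⟩
  | cons x rest =>
    have hx : x = 0 ∨ x = 1 ∨ x = 2 := by fin_cases x <;> simp
    rcases hx with rfl | rfl | rfl
    · cases rest with
      | nil => exact skel [] rfl (Or.inl rfl) true false rfl (by simp only [List.length_nil, List.length_cons]; omega)
      | cons y rest2 =>
        have hy : y = 0 ∨ y = 1 ∨ y = 2 := by fin_cases y <;> simp
        rcases hy with rfl | rfl | rfl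
        · exfalso; have := ok_head_pair h; simp [good2] at this
        · have h1 : ok (1 :: rest2) = true := ok_tail h
          exact skel rest2 (ok_tail h1) (after_b_list h1) true true rfl (by simp only [List.length_cons]; omega)
        · exact skel (2 :: rest2) (ok_tail h) (Or.inr ⟨rest2, rfl⟩) true false rfl (by simp only [List.length_cons]; omega)
    · exact skel rest (ok_tail h) (after_b_list h) false true rfl (by simp only [List.length_cons]; omega)
    · exact skel (2 :: rest) h (Or.inr ⟨rest, rfl⟩) false false rfl le_rfl

/-! ### The counting Finset -/

def F : ℕ → Finset (List Bool)
  | 0 => {[]}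
  | 1 => {[]}
  | 2 => {[], [false]}
  | (n+3) => {[]} ∪ (F (n+1)).image (List.cons false) ∪ (F n).image (List.cons true)

lemma nil_mem_F : ∀ n, [] ∈ F n
  | 0 => by simp [F]
  | 1 => by simp [F]
  | 2 => by simp [F]
  | (n+3) => by simp [F]

lemma weight_pos {l : List Bool} (h : l ≠ []) : 2 ≤ weight l := by
  match l with
  | f :: t => simp only [weight_cons]; split <;> omega

lemma mem_F_of_weight : ∀ (n : ℕ) (l : List Bool), weight l ≤ n → l ∈ F n := by
  intro n
  induction n using Nat.strong_induction_on with
  | _ n ih =>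
    intro l hl
    match l with
    | [] => exact nil_mem_F n
    | false :: t =>
      rw [weight_cons_false] at hl
      match n, hl with
      | 0, hl => exact absurd hl (by omega)
      | 1, hl => exact absurd hl (by omega)
      | 2, hl =>
        have : weight t = 0 := by omega
        have ht : t = [] := by
          by_contra hne
          have := weight_pos hne
          omega
        subst ht
        simp [F]
      | (n+3), hl =>
        have ht : t ∈ F (n+1) := ih (n+1) (by omega) t (by omega)
        simp only [F, Finset.mem_union, Finset.mem_image]
        exact Or.inl (Or.inr ⟨t, ht, rfl⟩)
    | true :: t =>
      rw [weight_cons_true] at hl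
      match n, hl with
      | 0, hl => exact absurd hl (by omega)
      | 1, hl => exact absurd hl (by omega)
      | 2, hl => exact absurd hl (by omega)
      | (n+3), hl =>
        have ht : t ∈ F n := ih n (by omega) t (by omega)
        simp only [F, Finset.mem_union, Finset.mem_image]
        exact Or.inr ⟨t, ht, rfl⟩

lemma weight_le_of_mem_F : ∀ (n : ℕ) (l : List Bool), l ∈ F n → weight l ≤ n := by
  intro n
  induction n using Nat.strong_induction_on with
  | _ n ih =>
    intro l hl
    match n with
    | 0 => simp [F] at hl; simp [hl]
    | 1 => simp [F] at hl; simp [hl]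
    | 2 =>
      simp [F] at hl
      rcases hl with rfl | rfl
      · simp [weight]
      · rw [weight_cons_false]; simp [weight]
    | (n+3) =>
      simp only [F, Finset.mem_union, Finset.mem_image, Finset.mem_singleton] at hl
      rcases hl with (rfl | ⟨t, ht, rfl⟩) | ⟨t, ht, rfl⟩
      · simp [weight]
      · have := ih (n+1) (by omega) t ht
        rw [weight_cons_false]; omega
      · have := ih n (by omega) t ht
        rw [weight_cons_true]; omega

lemma card_F_le (n : ℕ) : (F (n+3)).card ≤ 1 + (F (n+1)).card + (F n).card := by
  simp only [F]
  calc (({[]} : Finset (List Bool)) ∪ (F (n+1)).image (List.cons false)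
          ∪ (F n).image (List.cons true)).card
      ≤ (({[]} : Finset (List Bool)) ∪ (F (n+1)).image (List.cons false)).card
          + ((F n).image (List.cons true)).card := Finset.card_union_le _ _
    _ ≤ (({[]} : Finset (List Bool)).card + ((F (n+1)).image (List.cons false)).card)
          + ((F n).image (List.cons true)).card := by
        have := Finset.card_union_le ({[]} : Finset (List Bool))
          ((F (n+1)).image (List.cons false))
        omega
    _ ≤ 1 + (F (n+1)).card + (F n).card := by
        have h1 := Finset.card_image_le (s := F (n+1)) (f := List.cons false)
        have h2 := Finset.card_image_le (s := F n) (f := List.cons true)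
        simp only [Finset.card_singleton]
        omega

lemma card_F_ge (n : ℕ) : (F (n+1)).card + (F n).card ≤ (F (n+3)).card := by
  have hsub : (F (n+1)).image (List.cons false) ∪ (F n).image (List.cons true) ⊆ F (n+3) := by
    simp only [F]
    intro x hx
    simp only [Finset.mem_union] at hx ⊢
    tauto
  have hdisj : Disjoint ((F (n+1)).image (List.cons false)) ((F n).image (List.cons true)) := by
    rw [Finset.disjoint_left]
    rintro x hx1 hx2
    simp only [Finset.mem_image] at hx1 hx2
    obtain ⟨t1, _, rfl⟩ := hx1
    obtain ⟨t2, _, h⟩ := hx2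
    exact absurd (List.cons.inj h.symm).1 (by simp)
  calc (F (n+1)).card + (F n).card
      = ((F (n+1)).image (List.cons false)).card + ((F n).image (List.cons true)).card := by
        rw [Finset.card_image_of_injective _ (fun x y h => (List.cons.inj h).2),
            Finset.card_image_of_injective _ (fun x y h => (List.cons.inj h).2)]
    _ = ((F (n+1)).image (List.cons false) ∪ (F n).image (List.cons true)).card :=
        (Finset.card_union_of_disjoint hdisj).symm
    _ ≤ (F (n+3)).card := Finset.card_le_card hsub

section Alpha

variable {α : ℝ} (hroot : α ^ 3 = α + 1) (h1 : 1 < α) (h2 : α ≤ 2)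

include hroot h1 h2 in
lemma F_card_upper : ∀ n : ℕ, ((F n).card : ℝ) + 1 ≤ 3 * α ^ n := by
  intro n
  induction n using Nat.strong_induction_on with
  | _ n ih =>
    match n with
    | 0 => norm_num [F]
    | 1 => simp only [F]; norm_num; nlinarith
    | 2 =>
      have : ((F 2).card : ℝ) = 2 := by norm_num [F]
      rw [this]; nlinarith
    | (n+3) =>
      have hle := card_F_le n
      have i1 := ih (n+1) (by omega)
      have i2 := ih n (by omega)
      have hcast : ((F (n+3)).card : ℝ) ≤ 1 + ((F (n+1)).card : ℝ) + ((F n).card : ℝ) := by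
        exact_mod_cast hle
      have hpow : (3:ℝ) * α ^ (n+3) = 3 * α ^ (n+1) + 3 * α ^ n := by
        have : α ^ (n+3) = α ^ n * α ^ 3 := by ring
        rw [this, hroot]; ring
      have hα : (1:ℝ) ≤ α ^ n := one_le_pow₀ (le_of_lt h1)
      nlinarith

include hroot h1 h2 in
lemma F_card_lower : ∀ n : ℕ, (1/2 : ℝ) * α ^ n ≤ ((F n).card : ℝ) := by
  intro n
  induction n using Nat.strong_induction_on with
  | _ n ih =>
    match n with
    | 0 => norm_num [F]
    | 1 => simp only [F]; norm_num; nlinarith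
    | 2 =>
      have : ((F 2).card : ℝ) = 2 := by norm_num [F]
      rw [this]; nlinarith
    | (n+3) =>
      have hge := card_F_ge n
      have i1 := ih (n+1) (by omega)
      have i2 := ih n (by omega)
      have hcast : ((F (n+1)).card : ℝ) + ((F n).card : ℝ) ≤ ((F (n+3)).card : ℝ) := by
        exact_mod_cast hge
      have hpow : (1/2:ℝ) * α ^ (n+3) = 1/2 * α ^ (n+1) + 1/2 * α ^ n := by
        have : α ^ (n+3) = α ^ n * α ^ 3 := by ring
        rw [this, hroot]; ring
      nlinarith

end Alpha

/-! ### Word length translation -/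

def S : Set G := {gen 0, gen 1, gen 2}

lemma gen_mem_S (i : Fin 3) : gen i ∈ S := by
  fin_cases i <;> simp [S]

lemma letter_eq {x : G} (h : x ∈ S ∨ x⁻¹ ∈ S) : ∃ i, gen i = x := by
  have hS : ∀ y : G, y ∈ S → ∃ i, gen i = y := by
    intro y hy
    rcases hy with rfl | rfl | rfl
    exacts [⟨0, rfl⟩, ⟨1, rfl⟩, ⟨2, rfl⟩]
  rcases h with h | h
  · exact hS x h
  · obtain ⟨i, hi⟩ := hS _ h
    exact ⟨i, by rw [← inv_inv x, ← hi, gen_inv]⟩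

lemma list_to_word : ∀ l : List G, (∀ x ∈ l, x ∈ S ∨ x⁻¹ ∈ S) →
    ∃ w : List (Fin 3), w.map gen = l := by
  intro l
  induction l with
  | nil => exact fun _ => ⟨[], rfl⟩
  | cons x t ih =>
    intro h
    obtain ⟨w, hw⟩ := ih (fun y hy => h y (List.mem_cons_of_mem _ hy))
    obtain ⟨i, hi⟩ := letter_eq (h x List.mem_cons_self)
    exact ⟨i :: w, by simp [hw, hi]⟩

lemma wl_le_of_word {g : G} (w : List (Fin 3)) (h : evalG w = g) :
    wordLength S g ≤ w.length := by
  apply Nat.sInf_le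
  exact ⟨w.map gen, by simp, fun x hx => by
    simp only [List.mem_map] at hx
    obtain ⟨i, _, rfl⟩ := hx
    exact Or.inl (gen_mem_S i), by rw [← h]; rfl⟩

lemma word_of_wl {g : G} {n : ℕ} (h : wordLength S g ≤ n) :
    ∃ w : List (Fin 3), w.length ≤ n ∧ evalG w = g := by
  have hne : {m | ∃ l : List G, l.length = m ∧ (∀ x ∈ l, x ∈ S ∨ x⁻¹ ∈ S) ∧ l.prod = g}.Nonempty := by
    obtain ⟨w, hw⟩ := exists_word g
    exact ⟨w.length, w.map gen, by simp, fun x hx => by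
      simp only [List.mem_map] at hx
      obtain ⟨i, _, rfl⟩ := hx
      exact Or.inl (gen_mem_S i), by rw [← hw]; rfl⟩
  have hmem := Nat.sInf_mem hne
  obtain ⟨l, hlen, hletters, hprod⟩ := hmem
  obtain ⟨w, hw⟩ := list_to_word l hletters
  refine ⟨w, ?_, ?_⟩
  · have : w.length = l.length := by rw [← hw, List.length_map]
    rw [this, hlen]
    exact h
  · rw [show evalG w = (w.map gen).prod from rfl, hw, hprod]

/-! ### Matrix representation (geometric representation of the Coxeter group) -/

open Matrix

abbrev M3 := Matrix (Fin 3) (Fin 3) ℚ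

def MA : M3 := !![-1,0,1; 0,1,0; 0,0,1]
def MB : M3 := !![1,0,0; 0,-1,2; 0,0,1]
def MC : M3 := !![1,0,0; 0,1,0; 1,2,-1]

lemma MA_sq : MA * MA = 1 := by
  rw [Matrix.one_fin_three]; simp [MA, Matrix.mul_fin_three]
lemma MB_sq : MB * MB = 1 := by
  rw [Matrix.one_fin_three]; simp [MB, Matrix.mul_fin_three]
lemma MC_sq : MC * MC = 1 := by
  rw [Matrix.one_fin_three]; simp [MC, Matrix.mul_fin_three]

def uA : M3ˣ := ⟨MA, MA, MA_sq, MA_sq⟩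
def uB : M3ˣ := ⟨MB, MB, MB_sq, MB_sq⟩
def uC : M3ˣ := ⟨MC, MC, MC_sq, MC_sq⟩

def ρf : Fin 3 → M3ˣ := ![uA, uB, uC]

lemma rel_check : ∀ r ∈ pglRels, FreeGroup.lift ρf r = 1 := by
  intro r hr
  simp only [pglRels, Set.mem_insert_iff, Set.mem_singleton_iff] at hr
  rcases hr with rfl | rfl | rfl | rfl | rfl
  · rw [map_pow, FreeGroup.lift_apply_of, sq]
    exact Units.ext MA_sq
  · rw [map_pow, FreeGroup.lift_apply_of, sq]
    exact Units.ext MB_sq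
  · rw [map_pow, FreeGroup.lift_apply_of, sq]
    exact Units.ext MC_sq
  · rw [map_pow, _root_.map_mul, FreeGroup.lift_apply_of, FreeGroup.lift_apply_of, sq]
    refine Units.ext ?_
    show MA * MB * (MA * MB) = 1
    rw [Matrix.one_fin_three]
    simp [MA, MB, Matrix.mul_fin_three]
  · rw [map_pow, _root_.map_mul, FreeGroup.lift_apply_of, FreeGroup.lift_apply_of,
      pow_succ, pow_succ, pow_one]
    refine Units.ext ?_
    show MA * MC * (MA * MC) * (MA * MC) = 1
    rw [Matrix.one_fin_three]
    simp [MA, MC, Matrix.mul_fin_three]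

def ρ : G →* M3ˣ := PresentedGroup.toGroup rel_check

lemma ρ_gen (i : Fin 3) : ρ (gen i) = ρf i := PresentedGroup.toGroup.of rel_check

/-! ### Ping-pong -/

def MU : M3 := !![1,0,0; 0,-1,2; 1,-2,3]
def MV : M3 := !![-1,0,1; 0,-1,2; -1,-2,4]

lemma MU_eq : (ρ (evalG [2,1]) : M3) = MU := by
  have h : evalG [2,1] = gen 2 * gen 1 := by simp [evalG]
  rw [h, _root_.map_mul, ρ_gen, ρ_gen, Units.val_mul]
  show MC * MB = MU
  simp [MB, MC, MU, Matrix.mul_fin_three]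
  norm_num

lemma MV_eq : (ρ (evalG [2,0,1]) : M3) = MV := by
  have h : evalG [2,0,1] = gen 2 * (gen 0 * gen 1) := by simp [evalG, mul_assoc]
  rw [h, _root_.map_mul, _root_.map_mul, ρ_gen, ρ_gen, ρ_gen, Units.val_mul, Units.val_mul]
  show MC * (MA * MB) = MV
  simp [MA, MB, MC, MV, Matrix.mul_fin_three]
  norm_num

def K : Set (Fin 3 → ℚ) :=
  {v | 0 ≤ v 0 ∧ 2 * v 0 < v 2 ∧ v 2 ≤ 2 * v 1 ∧ v 1 < v 2}

def sep (v : Fin 3 → ℚ) : ℚ := v 0 - 2 * v 1 + v 2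

lemma MU_mulVec (v : Fin 3 → ℚ) :
    MU.mulVec v = ![v 0, -v 1 + 2 * v 2, v 0 - 2 * v 1 + 3 * v 2] := by
  funext i
  fin_cases i <;>
    simp [MU, Matrix.mulVec, dotProduct, Fin.sum_univ_three] <;>
    ring

lemma MV_mulVec (v : Fin 3 → ℚ) :
    MV.mulVec v = ![-v 0 + v 2, -v 1 + 2 * v 2, -v 0 - 2 * v 1 + 4 * v 2] := by
  funext i
  fin_cases i <;>
    simp [MV, Matrix.mulVec, dotProduct, Fin.sum_univ_three] <;>
    ring

lemma hU {v : Fin 3 → ℚ} (hv : v ∈ K) : MU.mulVec v ∈ K ∧ sep (MU.mulVec v) < 0 := by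
  obtain ⟨h1, h2, h3, h4⟩ := hv
  rw [MU_mulVec]
  refine ⟨⟨?_, ?_, ?_, ?_⟩, ?_⟩
  · show (0:ℚ) ≤ v 0
    linarith
  · show 2 * v 0 < v 0 - 2 * v 1 + 3 * v 2
    linarith
  · show v 0 - 2 * v 1 + 3 * v 2 ≤ 2 * (-v 1 + 2 * v 2)
    linarith
  · show -v 1 + 2 * v 2 < v 0 - 2 * v 1 + 3 * v 2
    linarith
  · show v 0 - 2 * (-v 1 + 2 * v 2) + (v 0 - 2 * v 1 + 3 * v 2) < 0
    linarith

lemma hV {v : Fin 3 → ℚ} (hv : v ∈ K) : MV.mulVec v ∈ K ∧ 0 < sep (MV.mulVec v) := by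
  obtain ⟨h1, h2, h3, h4⟩ := hv
  rw [MV_mulVec]
  refine ⟨⟨?_, ?_, ?_, ?_⟩, ?_⟩
  · show (0:ℚ) ≤ -v 0 + v 2
    linarith
  · show 2 * (-v 0 + v 2) < -v 0 - 2 * v 1 + 4 * v 2
    linarith
  · show -v 0 - 2 * v 1 + 4 * v 2 ≤ 2 * (-v 1 + 2 * v 2)
    linarith
  · show -v 1 + 2 * v 2 < -v 0 - 2 * v 1 + 4 * v 2
    linarith
  · show (0:ℚ) < -v 0 + v 2 - 2 * (-v 1 + 2 * v 2) + (-v 0 - 2 * v 1 + 4 * v 2)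
    linarith

def x0 : Fin 3 → ℚ := ![0, 1/2, 1]

lemma x0_mem : x0 ∈ K := by
  refine ⟨?_, ?_, ?_, ?_⟩
  · show (0:ℚ) ≤ (0:ℚ); norm_num
  · show 2 * (0:ℚ) < 1; norm_num
  · show (1:ℚ) ≤ 2 * (1/2 : ℚ); norm_num
  · show (1/2 : ℚ) < 1; norm_num

lemma x0_sep : sep x0 = 0 := by show (0:ℚ) - 2 * (1/2 : ℚ) + 1 = 0; norm_num

/-- the vector attached to a flag word -/
def vec (l : List Bool) : Fin 3 → ℚ := (ρ (evalG (decodeSkel l 0)) : M3).mulVec x0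

lemma decodeSkel_nil : decodeSkel [] 0 = [] := rfl

lemma decodeSkel_cons_false (l : List Bool) :
    decodeSkel (false :: l) 0 = [2,1] ++ decodeSkel l 0 := by
  simp [decodeSkel, block]

lemma decodeSkel_cons_true (l : List Bool) :
    decodeSkel (true :: l) 0 = [2,0,1] ++ decodeSkel l 0 := by
  simp [decodeSkel, block]

lemma vec_nil : vec [] = x0 := by
  show ((ρ (evalG [])).val).mulVec x0 = x0
  rw [evalG_nil, _root_.map_one, Units.val_one, Matrix.one_mulVec]

lemma vec_cons_false (l : List Bool) : vec (false :: l) = MU.mulVec (vec l) := by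
  show ((ρ (evalG (decodeSkel (false :: l) 0))).val).mulVec x0 = _
  rw [decodeSkel_cons_false, evalG_append, _root_.map_mul, Units.val_mul,
    ← Matrix.mulVec_mulVec, MU_eq]
  rfl

lemma vec_cons_true (l : List Bool) : vec (true :: l) = MV.mulVec (vec l) := by
  show ((ρ (evalG (decodeSkel (true :: l) 0))).val).mulVec x0 = _
  rw [decodeSkel_cons_true, evalG_append, _root_.map_mul, Units.val_mul,
    ← Matrix.mulVec_mulVec, MV_eq]
  rfl

lemma vec_mem (l : List Bool) : vec l ∈ K := by
  induction l with
  | nil => rw [vec_nil]; exact x0_mem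
  | cons f t ih =>
    cases f
    · rw [vec_cons_false]; exact (hU ih).1
    · rw [vec_cons_true]; exact (hV ih).1

lemma sep_vec_cons (f : Bool) (t : List Bool) : sep (vec (f :: t)) ≠ 0 := by
  cases f
  · rw [vec_cons_false]
    exact ne_of_lt (hU (vec_mem t)).2
  · rw [vec_cons_true]
    exact (ne_of_lt (hV (vec_mem t)).2).symm

lemma vec_inj : ∀ l1 l2 : List Bool, vec l1 = vec l2 → l1 = l2 := by
  intro l1
  induction l1 with
  | nil =>
    intro l2 h
    cases l2 with
    | nil => rfl
    | cons f t =>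
      exfalso
      apply sep_vec_cons f t
      rw [← h, vec_nil, x0_sep]
  | cons f1 t1 ih =>
    intro l2 h
    cases l2 with
    | nil =>
      exfalso
      apply sep_vec_cons f1 t1
      rw [h, vec_nil, x0_sep]
    | cons f2 t2 =>
      have hff : f1 = f2 := by
        cases f1 <;> cases f2
        · rfl
        · exfalso
          rw [vec_cons_false, vec_cons_true] at h
          have a1 := (hU (vec_mem t1)).2
          have a2 := (hV (vec_mem t2)).2
          rw [h] at a1
          linarith
        · exfalso
          rw [vec_cons_true, vec_cons_false] at h
          have a1 := (hV (vec_mem t1)).2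
          have a2 := (hU (vec_mem t2)).2
          rw [← h] at a2
          linarith
        · rfl
      subst hff
      have hc : vec t1 = vec t2 := by
        cases f1
        · rw [vec_cons_false, vec_cons_false] at h
          have := congrArg (fun w => (((ρ (evalG [2,1]))⁻¹ : M3ˣ) : M3).mulVec w) h
          simpa only [Matrix.mulVec_mulVec, ← MU_eq, ← Units.val_mul, inv_mul_cancel,
            Units.val_one, Matrix.one_mulVec] using this
        · rw [vec_cons_true, vec_cons_true] at h
          have := congrArg (fun w => (((ρ (evalG [2,0,1]))⁻¹ : M3ˣ) : M3).mulVec w) h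
          simpa only [Matrix.mulVec_mulVec, ← MV_eq, ← Units.val_mul, inv_mul_cancel,
            Units.val_one, Matrix.one_mulVec] using this
      rw [ih t2 hc]

lemma skel_inj (l1 l2 : List Bool)
    (h : evalG (decodeSkel l1 0) = evalG (decodeSkel l2 0)) : l1 = l2 := by
  apply vec_inj
  simp [vec, h]

lemma decodeSkel_len (l : List Bool) : (decodeSkel l 0).length = weight l := by
  induction l with
  | nil => rfl
  | cons f t ih =>
    cases f
    · rw [decodeSkel_cons_false, weight_cons_false]
      simp [ih]
      omega
    · rw [decodeSkel_cons_true, weight_cons_true]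
      simp [ih]
      omega

/-! ### Cardinality bounds for the balls -/

def ball (n : ℕ) : Set G := {g : G | wordLength S g ≤ n}

def Phi (l : List Bool) : G := evalG (decodeSkel l 0)

lemma Phi_inj : Function.Injective Phi := fun l1 l2 h => skel_inj l1 l2 h

def Psi (code : Bool × Bool × List Bool × Fin 3) : G := evalG (decodeFull code)

def codes (n : ℕ) : Finset (Bool × Bool × List Bool × Fin 3) :=
  Finset.univ ×ˢ Finset.univ ×ˢ F n ×ˢ Finset.univ

lemma ball_subset (n : ℕ) : ball n ⊆ Psi '' ↑(codes n) := by
  intro g hg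
  obtain ⟨w, hwlen, hweval⟩ := word_of_wl hg
  obtain ⟨w', hok, heval, hlen⟩ := exists_ok w
  obtain ⟨code, hdec, hwt⟩ := okFull w' hok
  refine ⟨code, ?_, ?_⟩
  · simp only [codes, Finset.coe_product, Set.mem_prod]
    refine ⟨by simp, by simp, ?_, by simp⟩
    exact mem_F_of_weight n _ (by omega)
  · rw [Psi, hdec, heval, hweval]

lemma ball_finite (n : ℕ) : (ball n).Finite :=
  Set.Finite.subset (Set.Finite.image Psi (codes n).finite_toSet) (ball_subset n)

lemma ball_card_upper (n : ℕ) : Nat.card (ball n) ≤ 12 * (F n).card := by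
  have h1 : (ball n).ncard ≤ (Psi '' ↑(codes n)).ncard :=
    Set.ncard_le_ncard (ball_subset n) (Set.Finite.image Psi (codes n).finite_toSet)
  have h2 : (Psi '' ↑(codes n)).ncard ≤ (↑(codes n) : Set (Bool × Bool × List Bool × Fin 3)).ncard :=
    Set.ncard_image_le (codes n).finite_toSet
  have h3 : (↑(codes n) : Set (Bool × Bool × List Bool × Fin 3)).ncard = (codes n).card :=
    Set.ncard_coe_finset _
  have h4 : (codes n).card = 12 * (F n).card := by
    simp only [codes, Finset.card_product]
    simp [Finset.card_univ]
    ring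
  rw [Nat.card_coe_set_eq]
  omega

lemma ball_card_lower (n : ℕ) : (F n).card ≤ Nat.card (ball n) := by
  have hsub : Phi '' ↑(F n) ⊆ ball n := by
    rintro g ⟨l, hl, rfl⟩
    have hwt : weight l ≤ n := weight_le_of_mem_F n l hl
    have := wl_le_of_word (decodeSkel l 0) rfl
    rw [decodeSkel_len] at this
    exact le_trans this hwt
  have h1 : (Phi '' ↑(F n)).ncard = (F n).card := by
    rw [Set.ncard_image_of_injective _ Phi_inj, Set.ncard_coe_finset]
  have h2 : (Phi '' ↑(F n)).ncard ≤ (ball n).ncard :=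
    Set.ncard_le_ncard hsub (ball_finite n)
  rw [Nat.card_coe_set_eq]
  omega

end PGL

open PGL in
/-- The exponential growth rate of `PGL(2,ℤ) = ⟨a, b, c ∣ a² = b² = c² = (ab)² = (ac)³ = 1⟩`
with respect to `S = {a, b, c}` equals the unique positive root `α` of `z³ - z - 1`. -/
theorem pgl_growth_rate (α : ℝ) (hα_pos : 0 < α) (hα_root : α ^ 3 - α - 1 = 0) :
    letI a : PresentedGroup pglRels := PresentedGroup.of 0
    letI b : PresentedGroup pglRels := PresentedGroup.of 1
    letI c : PresentedGroup pglRels := PresentedGroup.of 2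
    Tendsto
      (fun n : ℕ =>
        (Nat.card {g : PresentedGroup pglRels | wordLength {a, b, c} g ≤ n} : ℝ) ^
          (1 / (n : ℝ)))
      atTop (nhds α) := by
  show Tendsto (fun n : ℕ => (Nat.card (ball n) : ℝ) ^ (1/(n:ℝ))) atTop (nhds α)
  have hroot : α ^ 3 = α + 1 := by linarith
  have h1 : 1 < α := by nlinarith [sq_nonneg α, sq_nonneg (α - 1), sq_nonneg (α + 1)]
  have h2 : α ≤ 2 := by nlinarith [sq_nonneg α, sq_nonneg (α - 1)]
  -- real bounds on ball cardinality
  have hup : ∀ n : ℕ, (Nat.card (ball n) : ℝ) ≤ 36 * α ^ n := by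
    intro n
    have hc := ball_card_upper n
    have hF := F_card_upper hroot h1 h2 n
    have : (Nat.card (ball n) : ℝ) ≤ 12 * ((F n).card : ℝ) := by exact_mod_cast hc
    nlinarith
  have hlo : ∀ n : ℕ, (1/2 : ℝ) * α ^ n ≤ (Nat.card (ball n) : ℝ) := by
    intro n
    have hc := ball_card_lower n
    have hF := F_card_lower hroot h1 h2 n
    have : ((F n).card : ℝ) ≤ (Nat.card (ball n) : ℝ) := by exact_mod_cast hc
    linarith
  -- squeeze
  have hαnn : (0:ℝ) ≤ α := le_of_lt hα_pos
  have key : ∀ C : ℝ, 0 < C →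
      Tendsto (fun n : ℕ => C ^ (1/(n:ℝ)) * α) atTop (nhds α) := by
    intro C hC
    have hexp : Tendsto (fun n : ℕ => Real.exp ((1/(n:ℝ)) * Real.log C)) atTop (nhds 1) := by
      have hx : Tendsto (fun n : ℕ => (1/(n:ℝ)) * Real.log C) atTop (nhds 0) := by
        simpa using tendsto_one_div_atTop_nhds_zero_nat.mul_const (Real.log C)
      simpa [Function.comp_def] using (Real.continuous_exp.tendsto 0).comp hx
    have heq : (fun n : ℕ => C ^ (1/(n:ℝ)) * α) = fun n : ℕ =>
        Real.exp ((1/(n:ℝ)) * Real.log C) * α := by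
      funext n
      rw [Real.rpow_def_of_pos hC, mul_comm (Real.log C)]
    rw [heq]
    simpa using hexp.mul_const α
  have hgc : Tendsto (fun n : ℕ => ((1:ℝ)/2) ^ (1/(n:ℝ)) * α) atTop (nhds α) :=
    key (1/2) (by norm_num)
  have hhc : Tendsto (fun n : ℕ => (36:ℝ) ^ (1/(n:ℝ)) * α) atTop (nhds α) :=
    key 36 (by norm_num)
  have hrpow : ∀ (C : ℝ), 0 ≤ C → ∀ n : ℕ, 1 ≤ n →
      (C * α ^ n) ^ (1/(n:ℝ)) = C ^ (1/(n:ℝ)) * α := by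
    intro C hC n hn
    have hn0 : (n:ℝ) ≠ 0 := by
      have : (1:ℝ) ≤ (n:ℝ) := by exact_mod_cast hn
      linarith
    rw [Real.mul_rpow hC (pow_nonneg hαnn n)]
    congr 1
    rw [← Real.rpow_natCast α n, ← Real.rpow_mul hαnn,
      mul_one_div, div_self hn0, Real.rpow_one]
  refine tendsto_of_tendsto_of_tendsto_of_le_of_le' hgc hhc ?_ ?_
  · filter_upwards [eventually_ge_atTop 1] with n hn
    rw [← hrpow (1/2) (by norm_num) n hn]
    exact Real.rpow_le_rpow (by positivity) (hlo n) (by positivity)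
  · filter_upwards [eventually_ge_atTop 1] with n hn
    rw [← hrpow 36 (by norm_num) n hn]
    exact Real.rpow_le_rpow (by positivity) (hup n) (by positivity)
end
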